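/- Let D > 0 and M > 0. The function v(x', x_n) = (M + 2D²) x_n log(x_n/D) + x_n (|x'|² - D²) is convex on {x ∈ ℝⁿ : 0 < x_n, |x| < D}, and its Hessian determinant equals 2^{n-1} x_n^{n-2} (M + 2D² - 2|x'|²) ≥ 2M x_n^{n-2} there. -/

import Mathlib

open Real

open Finset


noncomputable def Wf (n : ℕ) (N : Fin n) (c D : ℝ) (z : EuclideanSpace ℝ (Fin n)) : ℝ :=
  c * z N * Real.log (z N / D) + z N * ((∑ i, z i * z i) - z N * z N - D ^ 2)

noncomputable def DW (n : ℕ) (N : Fin n) (c D : ℝ) (y : EuclideanSpace ℝ (Fin n)) :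
    EuclideanSpace ℝ (Fin n) →L[ℝ] ℝ :=
  (c * (Real.log (y N / D) + 1) + ((∑ i, y i * y i) - y N * y N - D ^ 2) - 2 * (y N * y N)) •
      (EuclideanSpace.proj N : EuclideanSpace ℝ (Fin n) →L[ℝ] ℝ)
    + ∑ i, (2 * (y N * y i)) • (EuclideanSpace.proj i : EuclideanSpace ℝ (Fin n) →L[ℝ] ℝ)

lemma hasFDerivAt_Wf {n : ℕ} (N : Fin n) (c D : ℝ) (hD : 0 < D)
    (y : EuclideanSpace ℝ (Fin n)) (hy : 0 < y N) :
    HasFDerivAt (Wf n N c D) (DW n N c D y) y := by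
  have hproj : ∀ i : Fin n, HasFDerivAt (fun z : EuclideanSpace ℝ (Fin n) => z i)
      (EuclideanSpace.proj i : EuclideanSpace ℝ (Fin n) →L[ℝ] ℝ) y := fun i =>
    (EuclideanSpace.proj (𝕜 := ℝ) i).hasFDerivAt
  have hdiv : HasFDerivAt (fun z : EuclideanSpace ℝ (Fin n) => z N / D)
      (D⁻¹ • (EuclideanSpace.proj N : EuclideanSpace ℝ (Fin n) →L[ℝ] ℝ)) y := by
    simp only [div_eq_mul_inv]
    simpa [mul_comm] using (hproj N).mul_const D⁻¹
  have hlog := hdiv.log (by positivity)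
  have hsum : HasFDerivAt (fun z : EuclideanSpace ℝ (Fin n) => ∑ i, z i * z i)
      (∑ i, (y i • (EuclideanSpace.proj i : EuclideanSpace ℝ (Fin n) →L[ℝ] ℝ)
        + y i • EuclideanSpace.proj i)) y :=
    HasFDerivAt.fun_sum fun i _ => (hproj i).fun_mul (hproj i)
  have h1 := (((hproj N).const_mul c).fun_mul hlog).fun_add
    ((hproj N).fun_mul ((hsum.fun_sub ((hproj N).fun_mul (hproj N))).sub_const (D ^ 2)))
  refine h1.congr_fderiv ?_
  refine ContinuousLinearMap.ext fun z => ?_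
  simp only [DW, ContinuousLinearMap.add_apply, ContinuousLinearMap.smul_apply,
    ContinuousLinearMap.sum_apply, PiLp.proj_apply, ContinuousLinearMap.coe_sub',
    Pi.sub_apply, smul_eq_mul, ContinuousLinearMap.coe_smul', Pi.smul_apply]
  have e1 : ∑ x : Fin n, 2 * (y N * y x) * z x = y N * ∑ x : Fin n, (y x * z x + y x * z x) := by
    rw [Finset.mul_sum]; exact Finset.sum_congr rfl fun x _ => by ring
  rw [e1]
  have hyN : y N ≠ 0 := ne_of_gt hy
  field_simp
  ring

lemma DW_apply_single {n : ℕ} (N : Fin n) (c D : ℝ) (y : EuclideanSpace ℝ (Fin n)) (i : Fin n) :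
    DW n N c D y (EuclideanSpace.single i 1) =
      (if i = N then
        c * (Real.log (y N / D) + 1) + ((∑ l, y l * y l) - y N * y N - D ^ 2) - 2 * (y N * y N)
      else 0) + 2 * (y N * y i) := by
  simp only [DW, ContinuousLinearMap.add_apply, ContinuousLinearMap.smul_apply,
    ContinuousLinearMap.sum_apply, PiLp.proj_apply, smul_eq_mul,
    EuclideanSpace.single_apply]
  simp only [mul_ite, mul_one, mul_zero, Finset.sum_ite_eq', Finset.mem_univ, if_true]
  by_cases hi : i = N
  · simp [hi]
  · simp [hi, Ne.symm hi]

lemma isOpen_posN {n : ℕ} (N : Fin n) : IsOpen {y : EuclideanSpace ℝ (Fin n) | 0 < y N} :=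
  isOpen_lt continuous_const (EuclideanSpace.proj (𝕜 := ℝ) N).continuous

lemma fderiv_fderiv_Wf {n : ℕ} (N : Fin n) (c D : ℝ) (hD : 0 < D)
    (x : EuclideanSpace ℝ (Fin n)) (hx : 0 < x N) (i j : Fin n) :
    fderiv ℝ (fun y => fderiv ℝ (Wf n N c D) y (EuclideanSpace.single i 1)) x
        (EuclideanSpace.single j 1) =
      if i = N then (if j = N then c / x N else 0) + 2 * x j - (if j = N then 2 * x N else 0)
      else (if j = N then 2 * x i else 0) + (if i = j then 2 * x N else 0) := by
  have hproj : ∀ k : Fin n, HasFDerivAt (fun z : EuclideanSpace ℝ (Fin n) => z k)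
      (EuclideanSpace.proj k : EuclideanSpace ℝ (Fin n) →L[ℝ] ℝ) x := fun k =>
    (EuclideanSpace.proj (𝕜 := ℝ) k).hasFDerivAt
  have hmem : {y : EuclideanSpace ℝ (Fin n) | 0 < y N} ∈ nhds x := (isOpen_posN N).mem_nhds hx
  have heq : (fun y => fderiv ℝ (Wf n N c D) y (EuclideanSpace.single i 1)) =ᶠ[nhds x]
      (fun y => (if i = N then
        c * (Real.log (y N / D) + 1) + ((∑ l, y l * y l) - y N * y N - D ^ 2) - 2 * (y N * y N)
      else 0) + 2 * (y N * y i)) := by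
    filter_upwards [hmem] with y hy
    rw [(hasFDerivAt_Wf N c D hD y hy).fderiv, DW_apply_single]
  rw [heq.fderiv_eq]
  by_cases hi : i = N
  · rw [hi]
    simp only [eq_self_iff_true, if_true]
    have hdiv : HasFDerivAt (fun z : EuclideanSpace ℝ (Fin n) => z N / D)
        (D⁻¹ • (EuclideanSpace.proj N : EuclideanSpace ℝ (Fin n) →L[ℝ] ℝ)) x := by
      simp only [div_eq_mul_inv]
      simpa [mul_comm] using (hproj N).mul_const D⁻¹
    have hlog := hdiv.log (by positivity)
    have hsum : HasFDerivAt (fun z : EuclideanSpace ℝ (Fin n) => ∑ l, z l * z l)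
        (∑ l, (x l • (EuclideanSpace.proj l : EuclideanSpace ℝ (Fin n) →L[ℝ] ℝ)
          + x l • EuclideanSpace.proj l)) x :=
      HasFDerivAt.fun_sum fun l _ => (hproj l).fun_mul (hproj l)
    have h3 := ((((hlog.add_const 1).const_mul c).fun_add
        ((hsum.fun_sub ((hproj N).fun_mul (hproj N))).sub_const (D ^ 2))).fun_sub
        (((hproj N).fun_mul (hproj N)).const_mul 2)).fun_add
        (((hproj N).fun_mul (hproj N)).const_mul 2)
    rw [h3.fderiv]
    have hxN : x N ≠ 0 := ne_of_gt hx
    simp only [ContinuousLinearMap.add_apply, ContinuousLinearMap.sub_apply,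
      ContinuousLinearMap.smul_apply, ContinuousLinearMap.sum_apply, PiLp.proj_apply,
      smul_eq_mul, ContinuousLinearMap.coe_smul', Pi.smul_apply, EuclideanSpace.single_apply,
      mul_ite, mul_one, mul_zero, ite_mul, zero_mul, Finset.sum_add_distrib,
      Finset.sum_ite_eq', Finset.mem_univ, if_true]
    by_cases hj : j = N
    · simp only [hj, if_pos rfl, ↓reduceIte]
      field_simp
      ring
    · simp only [if_neg (Ne.symm hj), if_neg hj]
      ring
  · simp only [if_neg hi]
    have h2 : HasFDerivAt (fun y : EuclideanSpace ℝ (Fin n) => 0 + 2 * (y N * y i))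
        ((2 * x i) • (EuclideanSpace.proj N : EuclideanSpace ℝ (Fin n) →L[ℝ] ℝ)
          + (2 * x N) • EuclideanSpace.proj i) x := by
      have := (((hproj N).fun_mul (hproj i)).const_mul 2).const_add 0
      refine this.congr_fderiv ?_
      refine ContinuousLinearMap.ext fun z => ?_
      simp only [ContinuousLinearMap.add_apply, ContinuousLinearMap.smul_apply, PiLp.proj_apply,
        smul_eq_mul, ContinuousLinearMap.coe_smul', Pi.smul_apply]
      ring
    rw [h2.fderiv]
    simp only [ContinuousLinearMap.add_apply, ContinuousLinearMap.smul_apply, PiLp.proj_apply,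
      smul_eq_mul, EuclideanSpace.single_apply]
    by_cases hj : j = N
    · simp [hj, hi, Ne.symm hi]
    · by_cases hij : i = j <;> simp [hj, hij, Ne.symm hj]
open Real Finset

lemma det_arrowhead {n : ℕ} (hn : 2 ≤ n) (N : Fin n) (hN : N = ⟨n - 1, Nat.sub_one_lt (by omega)⟩)
    (a t : ℝ) (ht : t ≠ 0) (b : Fin n → ℝ) (hbN : b N = t) :
    (Matrix.of fun i j : Fin n =>
        if i = N then (if j = N then a else 0) + 2 * b j - (if j = N then 2 * t else 0)
        else (if j = N then 2 * b i else 0) + (if i = j then 2 * t else 0)).det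
      = (2 * t) ^ (n - 1) * (a - 2 / t * ∑ k ∈ univ.erase N, b k ^ 2) := by
  have hNmax : ∀ i : Fin n, i ≤ N := by
    intro i; rw [hN, Fin.le_def]; simp; omega
  set H : Matrix (Fin n) (Fin n) ℝ := Matrix.of fun i j : Fin n =>
        if i = N then (if j = N then a else 0) + 2 * b j - (if j = N then 2 * t else 0)
        else (if j = N then 2 * b i else 0) + (if i = j then 2 * t else 0) with hH
  set Em : Matrix (Fin n) (Fin n) ℝ := Matrix.of fun i j : Fin n =>
        if i = N then (if j = N then 1 else -(b j / t)) else (if i = j then 1 else 0) with hE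
  set T : Matrix (Fin n) (Fin n) ℝ := Matrix.of fun i j : Fin n =>
        if i = N then (if j = N then a - 2 / t * ∑ k ∈ univ.erase N, b k ^ 2 else 0)
        else (if j = N then 2 * b i else 0) + (if i = j then 2 * t else 0) with hT
  have hlt : ∀ {i j : Fin n}, i < j → i ≠ N := by
    intro i j hij hiN
    exact absurd (lt_of_lt_of_le hij (hNmax j)) (by simp [hiN])
  have hEdet : Em.det = 1 := by
    rw [Matrix.det_of_lowerTriangular Em (by
      intro i j hij
      simp only [OrderDual.toDual_lt_toDual] at hij
      simp [hE, hlt hij, Ne.symm (ne_of_lt hij) ,ne_of_lt hij])]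
    apply Finset.prod_eq_one
    intro i _
    by_cases hi : i = N <;> simp [hE, hi]
  have hEH : Em * H = T := by
    ext i j
    rw [Matrix.mul_apply]
    by_cases hi : i = N
    · have hrow : ∀ k, Em i k = if k = N then 1 else -(b k / t) := by
        intro k; simp [hE, hi]
      rw [← Finset.sum_erase_add _ _ (Finset.mem_univ N)]
      have h1 : ∀ k ∈ univ.erase N, Em i k * H k j =
          -(b k / t) * ((if j = N then 2 * b k else 0) + (if k = j then 2 * t else 0)) := by
        intro k hk
        rw [hrow k, if_neg (Finset.ne_of_mem_erase hk)]
        simp [hH, Finset.ne_of_mem_erase hk]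
      rw [Finset.sum_congr rfl h1, hrow N, if_pos rfl, one_mul]
      by_cases hj : j = N
      · have h2 : ∀ k ∈ univ.erase N,
            -(b k / t) * ((if j = N then 2 * b k else 0) + (if k = j then 2 * t else 0))
              = -(2 / t * b k ^ 2) := by
          intro k hk
          rw [if_pos hj, if_neg (by rw [hj]; exact Finset.ne_of_mem_erase hk), add_zero]
          ring
        rw [Finset.sum_congr rfl h2]
        have h3 : H N j = a := by simp [hH, hj, hbN]
        rw [h3]
        have h4 : T i j = a - 2 / t * ∑ k ∈ univ.erase N, b k ^ 2 := by simp [hT, hi, hj]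
        rw [h4, Finset.sum_neg_distrib, Finset.mul_sum]
        ring
      · have h2 : ∀ k ∈ univ.erase N,
            -(b k / t) * ((if j = N then 2 * b k else 0) + (if k = j then 2 * t else 0))
              = if k = j then -(b k / t) * (2 * t) else 0 := by
          intro k hk
          rw [if_neg hj, zero_add]
          split <;> ring
        rw [Finset.sum_congr rfl h2, Finset.sum_ite_eq' (univ.erase N) j
          (fun k => -(b k / t) * (2 * t)),
          if_pos (Finset.mem_erase.2 ⟨hj, Finset.mem_univ j⟩)]
        have h3 : H N j = 2 * b j := by simp [hH, hj]
        rw [h3]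
        have h4 : T i j = 0 := by simp [hT, hi, hj, hlt, Ne.symm]
        rw [h4]
        field_simp
        ring
    · simp only [hE, hT, Matrix.of_apply, if_neg hi]
      rw [Finset.sum_congr rfl (fun k _ => by
        rw [show (if i = k then (1:ℝ) else 0) * H k j = if i = k then H k j else 0 from by
          split <;> ring])]
      rw [Finset.sum_ite_eq Finset.univ i (fun k => H k j), if_pos (Finset.mem_univ i)]
      simp [hH, hi]
  have hTdet : T.det = (2 * t) ^ (n - 1) * (a - 2 / t * ∑ k ∈ univ.erase N, b k ^ 2) := by
    rw [Matrix.det_of_upperTriangular (by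
      intro i j hij
      simp only [id] at hij
      have hjN : j ≠ N := hlt hij
      by_cases hi : i = N <;> simp [hT, hi, hjN, Ne.symm (ne_of_lt hij)])]
    rw [← Finset.mul_prod_erase _ _ (Finset.mem_univ N)]
    rw [Finset.prod_congr rfl (fun k hk => by
      simp [hT, Finset.ne_of_mem_erase hk] : ∀ k ∈ univ.erase N, T k k = 2 * t)]
    rw [Finset.prod_const]
    simp only [hT, Matrix.of_apply, if_pos rfl]
    rw [Finset.card_erase_of_mem (Finset.mem_univ N)]
    simp [mul_comm]
  calc H.det = Em.det * H.det := by rw [hEdet, one_mul]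
    _ = T.det := by rw [← Matrix.det_mul, hEH]
    _ = _ := hTdet

set_option maxHeartbeats 1000000 in
lemma convexOn_Wf {n : ℕ} (N : Fin n) (c D M : ℝ) (hD : 0 < D) (hM : 0 < M)
    (hc : c = M + 2 * D ^ 2) :
    ConvexOn ℝ {x : EuclideanSpace ℝ (Fin n) | 0 < x N ∧ ‖x‖ < D} (Wf n N c D) := by
  set S := {x : EuclideanSpace ℝ (Fin n) | 0 < x N ∧ ‖x‖ < D} with hSdef
  have hSconv : Convex ℝ S := by
    have : S = {x : EuclideanSpace ℝ (Fin n) | 0 < x N} ∩ Metric.ball 0 D := by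
      ext z; simp [hSdef, Metric.mem_ball, dist_zero_right]
    rw [this]
    exact (convex_halfSpace_gt ⟨fun _ _ => rfl, fun _ _ => rfl⟩ 0).inter (convex_ball 0 D)
  refine ⟨hSconv, fun p hp q hq a b ha hb hab => ?_⟩
  set d := q - p with hd
  set γ : ℝ → EuclideanSpace ℝ (Fin n) := fun t => p + t • d with hγ
  have hcomb : ∀ t : ℝ, (1 - t) • p + t • q = γ t := by intro t; simp only [hγ, hd]; module
  have hγS : ∀ t ∈ Set.Icc (0:ℝ) 1, γ t ∈ S := by
    intro t ht
    have h := hSconv hp hq (by linarith [ht.2] : (0:ℝ) ≤ 1 - t) ht.1 (by ring)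
    rwa [hcomb t] at h
  have hγ' : ∀ t : ℝ, HasDerivAt γ d t := fun t => by
    simpa [hγ] using ((hasDerivAt_id t).smul_const d).const_add p
  set f' : ℝ → ℝ := fun t => DW n N c D (γ t) d with hf'
  set g : ℝ → ℝ := fun t => Wf n N c D (γ t) with hg
  have hg' : ∀ t ∈ Set.Icc (0:ℝ) 1, HasDerivAt g (f' t) t := by
    intro t ht
    exact (hasFDerivAt_Wf N c D hD (γ t) (hγS t ht).1).comp_hasDerivAt t (hγ' t)
  have hcoord : ∀ (t : ℝ) (l : Fin n), γ t l = p l + t * d l := by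
    intro t l; simp [hγ]
  have hf'ex : f' = fun t =>
      (c * (Real.log ((p N + t * d N) / D) + 1) +
        ((∑ l, (p l + t * d l) * (p l + t * d l)) - (p N + t * d N) * (p N + t * d N) - D ^ 2)
        - 2 * ((p N + t * d N) * (p N + t * d N))) * d N
      + ∑ l, 2 * ((p N + t * d N) * (p l + t * d l)) * d l := by
    funext t
    simp only [hf', DW, ContinuousLinearMap.add_apply, ContinuousLinearMap.smul_apply,
      ContinuousLinearMap.sum_apply, PiLp.proj_apply, smul_eq_mul, hcoord]
  set f'' : ℝ → ℝ := fun t =>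
      (c * ((d N / D) / ((p N + t * d N) / D)) +
        ((∑ l, (d l * (p l + t * d l) + (p l + t * d l) * d l))
          - (d N * (p N + t * d N) + (p N + t * d N) * d N))
        - 2 * (d N * (p N + t * d N) + (p N + t * d N) * d N)) * d N
      + ∑ l, (2 * (d N * (p l + t * d l) + (p N + t * d N) * d l)) * d l with hf''def
  have hf''At : ∀ t, 0 < p N + t * d N → HasDerivAt f' (f'' t) t := by
    intro t hyN
    rw [hf'ex]
    have hcl : ∀ l : Fin n, HasDerivAt (fun u : ℝ => p l + u * d l) (d l) t := fun l => by
      simpa using ((hasDerivAt_id t).mul_const (d l)).const_add (p l)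
    have hlog1 : HasDerivAt (fun u : ℝ => Real.log ((p N + u * d N) / D))
        ((d N / D) / ((p N + t * d N) / D)) t :=
      ((hcl N).div_const D).log (by positivity)
    have hsum1 : HasDerivAt (fun u : ℝ => ∑ l, (p l + u * d l) * (p l + u * d l))
        (∑ l, (d l * (p l + t * d l) + (p l + t * d l) * d l)) t :=
      HasDerivAt.fun_sum fun l _ => (hcl l).fun_mul (hcl l)
    have hsum2 : HasDerivAt (fun u : ℝ => ∑ l, 2 * ((p N + u * d N) * (p l + u * d l)) * d l)
        (∑ l, (2 * (d N * (p l + t * d l) + (p N + t * d N) * d l)) * d l) t :=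
      HasDerivAt.fun_sum fun l _ => (((hcl N).fun_mul (hcl l)).const_mul 2).mul_const (d l)
    exact (((((hlog1.add_const 1).const_mul c).add
      ((hsum1.sub ((hcl N).mul (hcl N))).sub_const (D ^ 2))).sub
      (((hcl N).mul (hcl N)).const_mul 2)).mul_const (d N)).add hsum2
  have hf''nonneg : ∀ t ∈ Set.Ioo (0:ℝ) 1, 0 ≤ f'' t := by
    intro t ht
    obtain ⟨hy1, hy2⟩ := hγS t ⟨ht.1.le, ht.2.le⟩
    have hyN : 0 < p N + t * d N := by rwa [← hcoord t N]
    set P := ∑ l ∈ Finset.univ.erase N, (p l + t * d l) * d l with hP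
    set Q' := ∑ l ∈ Finset.univ.erase N, d l * d l with hQ'
    set s' := ∑ l ∈ Finset.univ.erase N, (p l + t * d l) * (p l + t * d l) with hs'
    have hQ'0 : 0 ≤ Q' := Finset.sum_nonneg fun l _ => mul_self_nonneg _
    have hs'0 : 0 ≤ s' := Finset.sum_nonneg fun l _ => mul_self_nonneg _
    have hP2 : P ^ 2 ≤ s' * Q' := by
      have h := Finset.sum_mul_sq_le_sq_mul_sq (Finset.univ.erase N)
        (fun l => p l + t * d l) (fun l => d l)
      simpa [hP, hs', hQ', pow_two] using h
    have hnorm : ‖γ t‖ ^ 2 = ∑ l, (p l + t * d l) * (p l + t * d l) := by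
      rw [EuclideanSpace.norm_eq, Real.sq_sqrt (Finset.sum_nonneg fun l _ => sq_nonneg _)]
      exact Finset.sum_congr rfl fun l _ => by
        rw [Real.norm_eq_abs, sq_abs, pow_two, hcoord t l]
    have hs'le : s' ≤ D ^ 2 := by
      have h1 : s' ≤ ∑ l, (p l + t * d l) * (p l + t * d l) :=
        Finset.sum_le_sum_of_subset_of_nonneg (Finset.subset_univ _)
          fun l _ _ => mul_self_nonneg _
      have h2 : ‖γ t‖ ^ 2 ≤ D ^ 2 := by
        have := pow_le_pow_left₀ (norm_nonneg (γ t)) hy2.le 2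
        exact this
      linarith [hnorm ▸ h2]
    have hR : ∑ l, (p l + t * d l) * d l = P + (p N + t * d N) * d N :=
      (Finset.sum_erase_add _ _ (Finset.mem_univ N)).symm
    have hQ : ∑ l, d l * d l = Q' + d N * d N :=
      (Finset.sum_erase_add _ _ (Finset.mem_univ N)).symm
    have hS1 : ∑ l, (d l * (p l + t * d l) + (p l + t * d l) * d l)
        = 2 * (P + (p N + t * d N) * d N) := by
      rw [show ∑ l, (d l * (p l + t * d l) + (p l + t * d l) * d l)
          = ∑ l, 2 * ((p l + t * d l) * d l) from Finset.sum_congr rfl fun l _ => by ring,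
        ← Finset.mul_sum, hR]
    have hS2 : ∑ l, (2 * (d N * (p l + t * d l) + (p N + t * d N) * d l)) * d l
        = 2 * d N * (P + (p N + t * d N) * d N) + 2 * (p N + t * d N) * (Q' + d N * d N) := by
      rw [show ∑ l, (2 * (d N * (p l + t * d l) + (p N + t * d N) * d l)) * d l
          = ∑ l, ((2 * d N) * ((p l + t * d l) * d l) + (2 * (p N + t * d N)) * (d l * d l))
          from Finset.sum_congr rfl fun l _ => by ring,
        Finset.sum_add_distrib, ← Finset.mul_sum, ← Finset.mul_sum, hR, hQ]
    have key : 0 ≤ c * d N ^ 2 + 4 * d N * P * (p N + t * d N)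
        + 2 * Q' * (p N + t * d N) ^ 2 := by
      rw [hc]
      have hP2D : P ^ 2 ≤ D ^ 2 * Q' := le_trans hP2 (mul_le_mul_of_nonneg_right hs'le hQ'0)
      have habs : 0 ≤ D ^ 2 * ((M + 2 * D ^ 2) * d N ^ 2 + 4 * d N * P * (p N + t * d N)
          + 2 * Q' * (p N + t * d N) ^ 2) := by
        nlinarith [sq_nonneg (D ^ 2 * d N + P * (p N + t * d N)),
          mul_nonneg (mul_nonneg hM.le (sq_nonneg D)) (sq_nonneg (d N)),
          mul_nonneg (sub_nonneg.2 hP2D) (sq_nonneg (p N + t * d N))]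
      nlinarith [habs, pow_pos hD 2]
    have hval : f'' t = (c * d N ^ 2 + 4 * d N * P * (p N + t * d N)
        + 2 * Q' * (p N + t * d N) ^ 2) / (p N + t * d N) := by
      simp only [hf''def]
      rw [hS1, hS2]
      have hyN' : p N + t * d N ≠ 0 := hyN.ne'
      have hD' : D ≠ 0 := hD.ne'
      have hyN'' : p N + d N * t ≠ 0 := by rw [mul_comm]; exact hyN'
      rw [eq_div_iff hyN']
      field_simp
      ring
    rw [hval]
    exact div_nonneg key hyN.le
  have hconv : ConvexOn ℝ (Set.Icc (0:ℝ) 1) g := by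
    apply convexOn_of_hasDerivWithinAt2_nonneg (convex_Icc 0 1)
      (fun t ht => ((hg' t ht).continuousAt).continuousWithinAt)
      (f' := f') (f'' := f'')
    · intro t ht
      rw [interior_Icc] at ht
      exact ((hg' t ⟨ht.1.le, ht.2.le⟩).hasDerivWithinAt)
    · intro t ht
      rw [interior_Icc] at ht
      have hyN : 0 < p N + t * d N := by
        have := (hγS t ⟨ht.1.le, ht.2.le⟩).1
        rwa [hcoord t N] at this
      exact (hf''At t hyN).hasDerivWithinAt
    · intro t ht
      rw [interior_Icc] at ht
      exact hf''nonneg t ht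
  have h01 := hconv.2 (Set.left_mem_Icc.2 zero_le_one) (Set.right_mem_Icc.2 zero_le_one) ha hb hab
  have hb1 : a • p + b • q = γ b := by
    have hba : a = 1 - b := by linarith
    rw [hba, hcomb b]
  have hg0 : g 0 = Wf n N c D p := by simp [hg, hγ]
  have hg1 : g 1 = Wf n N c D q := by simp [hg, hγ, hd]
  simp only [smul_eq_mul, mul_zero, mul_one, zero_add] at h01
  rw [hg0, hg1] at h01
  rw [hb1]
  exact h01

/-- The Hessian determinant of a function on Euclidean space, computed via
iterated Fréchet derivatives in the standard coordinate directions. -/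
noncomputable def hessDet {n : ℕ} (w : EuclideanSpace ℝ (Fin n) → ℝ)
    (x : EuclideanSpace ℝ (Fin n)) : ℝ :=
  (Matrix.of fun i j : Fin n =>
    fderiv ℝ (fun y => fderiv ℝ w y (EuclideanSpace.single i 1)) x
      (EuclideanSpace.single j 1)).det

theorem stmt10 (n : ℕ) (hn : 2 ≤ n) (D M : ℝ) (hD : 0 < D) (hM : 0 < M)
    (xn : EuclideanSpace ℝ (Fin n) → ℝ) (hxn : ∀ x, xn x = x ⟨n - 1, by omega⟩)
    (s : EuclideanSpace ℝ (Fin n) → ℝ) (hs : ∀ x, s x = ‖x‖ ^ 2 - (xn x) ^ 2)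
    (S : Set (EuclideanSpace ℝ (Fin n))) (hS : S = {x | 0 < xn x ∧ ‖x‖ < D})
    (v : EuclideanSpace ℝ (Fin n) → ℝ)
    (hv : ∀ x, v x = (M + 2 * D ^ 2) * xn x * Real.log (xn x / D) + xn x * (s x - D ^ 2)) :
    ConvexOn ℝ S v ∧
      ∀ x ∈ S,
        hessDet v x = (2 : ℝ) ^ (n - 1) * (xn x) ^ (n - 2) * (M + 2 * D ^ 2 - 2 * s x) ∧
        2 * M * (xn x) ^ (n - 2) ≤ hessDet v x := by
  have hn1 : 1 ≤ n := by omega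
  set N : Fin n := ⟨n - 1, by omega⟩ with hNdef
  set c : ℝ := M + 2 * D ^ 2 with hc
  have hxn' : ∀ z : EuclideanSpace ℝ (Fin n), xn z = z N := fun z => hxn z
  have hnormsq : ∀ z : EuclideanSpace ℝ (Fin n), ‖z‖ ^ 2 = ∑ l, z l * z l := by
    intro z
    rw [EuclideanSpace.norm_eq, Real.sq_sqrt (Finset.sum_nonneg fun l _ => sq_nonneg _)]
    exact Finset.sum_congr rfl fun l _ => by rw [Real.norm_eq_abs, sq_abs, pow_two]
  have hveq : v = Wf n N c D := by
    funext z
    rw [hv z, hs z, hxn' z, Wf, hnormsq z]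
    ring
  have hSeq : S = {x : EuclideanSpace ℝ (Fin n) | 0 < x N ∧ ‖x‖ < D} := by
    rw [hS]; ext z; simp [hxn' z]
  constructor
  · rw [hveq, hSeq]; exact convexOn_Wf N c D M hD hM hc
  · intro x hx
    have hxS : 0 < x N ∧ ‖x‖ < D := by rw [hSeq] at hx; exact hx
    have hxN : 0 < x N := hxS.1
    have hxNne : x N ≠ 0 := ne_of_gt hxN
    have hsx : s x = ∑ k ∈ Finset.univ.erase N, x k ^ 2 := by
      rw [hs x, hxn' x]
      have h1 : ‖x‖ ^ 2 = ∑ k, x k ^ 2 := by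
        rw [hnormsq]; exact Finset.sum_congr rfl fun k _ => (pow_two _).symm
      rw [h1, ← Finset.sum_erase_add _ (fun k => x k ^ 2) (Finset.mem_univ N)]
      ring
    have hmat : hessDet v x = (Matrix.of fun i j : Fin n =>
        if i = N then (if j = N then c / x N else 0) + 2 * x j - (if j = N then 2 * x N else 0)
        else (if j = N then 2 * x i else 0) + (if i = j then 2 * x N else 0)).det := by
      rw [hveq]
      unfold hessDet
      congr 1
      ext i j
      exact fderiv_fderiv_Wf N c D hD x hxN i j
    have hdet : hessDet v x = (2:ℝ) ^ (n - 1) * (x N) ^ (n - 2) * (c - 2 * s x) := by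
      rw [hmat, det_arrowhead hn N hNdef (c / x N) (x N) hxNne x rfl, hsx]
      have hexp : n - 1 = (n - 2) + 1 := by omega
      rw [mul_pow, hexp, pow_succ]
      field_simp
      ring
    rw [hxn' x]
    refine ⟨by rw [hdet, hc], ?_⟩
    rw [hdet]
    have hP0 : (0:ℝ) ≤ x N ^ (n - 2) := pow_nonneg hxN.le _
    have hsD : s x ≤ D ^ 2 := by
      rw [hs x]
      nlinarith [hxS.2, norm_nonneg x, sq_nonneg (xn x)]
    have hMle : M ≤ c - 2 * s x := by
      rw [hc]; linarith
    have h2le : (2:ℝ) ≤ 2 ^ (n - 1) := by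
      calc (2:ℝ) = 2 ^ 1 := (pow_one 2).symm
        _ ≤ 2 ^ (n - 1) := pow_le_pow_right₀ (by norm_num) (by omega)
    calc 2 * M * x N ^ (n - 2) = 2 * (M * x N ^ (n - 2)) := by ring
      _ ≤ 2 ^ (n - 1) * ((c - 2 * s x) * x N ^ (n - 2)) :=
          mul_le_mul h2le (mul_le_mul_of_nonneg_right hMle hP0)
            (by positivity) (by positivity)
      _ = 2 ^ (n - 1) * x N ^ (n - 2) * (c - 2 * s x) := by ring
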